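/- Let f be the generating function of an offspring distribution p on the nonnegative integers with mean m ∈ (0,1), and let g be the generating function of a probability measure ν on the positive integers. If g(f(s)) − g(f(0)) = m^α · g(s) for all s ∈ [0,1] and some α > 0, then ν is a quasi-stationary distribution of the Galton–Watson process with offspring distribution p, i.e., P_ν(N_n = j | N_n > 0) = ν(j) for all j ≥ 1 and n ≥ 0. -/

import Mathlib

open MeasureTheory Filter Topology

/-- Generating function `f(s) = ∑ p_j s^j` of an offspring distribution. -/
noncomputable def genFun (p : ℕ → ℝ) (s : ℝ) : ℝ := ∑' j, p j * s ^ j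

/-- Iterates `f_n` of the generating function: `f_0(s) = s`, `f_{n+1} = f ∘ f_n`. -/
noncomputable def genFunIter (p : ℕ → ℝ) : ℕ → ℝ → ℝ
  | 0, s => s
  | n + 1, s => genFun p (genFunIter p n s)

/-- If a power series with absolutely summable coefficients vanishes on `(0,1)`,
then all its coefficients vanish. -/
lemma coeffs_zero (c : ℕ → ℝ) (hc : Summable fun j => |c j|)
    (h : ∀ s ∈ Set.Ioo (0:ℝ) 1, ∑' j, c j * s ^ j = 0) : ∀ j, c j = 0 := by
  intro k
  induction k using Nat.strong_induction_on with
  | _ k ih =>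
    by_contra hck
    have hckpos : 0 < |c k| := abs_pos.mpr hck
    set C := ∑' j, |c j| with hC
    have hC0 : 0 ≤ C := tsum_nonneg fun j => abs_nonneg _
    have key : ∀ s : ℝ, s ∈ Set.Ioo (0:ℝ) 1 → |c k| ≤ s * (C + 1) := by
      intro s hs
      obtain ⟨hs0, hs1⟩ := hs
      have hsk : 0 < s ^ k := pow_pos hs0 k
      have habs : Summable fun j => |c j * s ^ j| := by
        apply hc.of_nonneg_of_le (fun j => abs_nonneg _)
        intro j
        rw [abs_mul, abs_pow, abs_of_pos hs0]
        calc |c j| * s ^ j ≤ |c j| * 1 :=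
              mul_le_mul_of_nonneg_left (pow_le_one₀ hs0.le hs1.le) (abs_nonneg _)
          _ = |c j| := mul_one _
      have hsum : Summable fun j => c j * s ^ j := habs.of_abs
      have hsplit := Summable.sum_add_tsum_nat_add (f := fun j => c j * s ^ j) (k+1) hsum
      rw [h s ⟨hs0, hs1⟩] at hsplit
      have hfin : ∑ i ∈ Finset.range (k+1), c i * s ^ i = c k * s ^ k := by
        rw [Finset.sum_eq_single k]
        · intro b hb hbk
          have hblt : b < k := lt_of_le_of_ne (Nat.lt_succ_iff.mp (Finset.mem_range.mp hb)) hbk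
          rw [ih b hblt, zero_mul]
        · intro hk; exact absurd (Finset.self_mem_range_succ k) hk
      rw [hfin] at hsplit
      have htailS : Summable fun i => |c (i + (k+1))| :=
        hc.comp_injective (add_left_injective (k+1))
      have h4 : Summable fun i => |c (i + (k+1)) * s ^ (i + (k+1))| :=
        habs.comp_injective (add_left_injective (k+1))
      have htail_le : ∑' i, |c (i + (k+1))| ≤ C := by
        have h5 := Summable.sum_add_tsum_nat_add (f := fun j => |c j|) (k+1) hc
        have hfn : 0 ≤ ∑ i ∈ Finset.range (k+1), |c i| :=
          Finset.sum_nonneg fun i _ => abs_nonneg _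
        linarith
      have htail : |∑' i, c (i + (k+1)) * s ^ (i + (k+1))| ≤ s ^ (k+1) * C := by
        have h6 : |∑' i, c (i + (k+1)) * s ^ (i + (k+1))|
            ≤ ∑' i, |c (i + (k+1)) * s ^ (i + (k+1))| := by
          have := norm_tsum_le_tsum_norm (f := fun i => c (i + (k+1)) * s ^ (i + (k+1)))
            (by simpa only [Real.norm_eq_abs] using h4)
          simpa only [Real.norm_eq_abs] using this
        have h7 : ∑' i, |c (i + (k+1)) * s ^ (i + (k+1))|
            ≤ ∑' i, |c (i + (k+1))| * s ^ (k+1) := by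
          apply Summable.tsum_le_tsum _ h4 (htailS.mul_right _)
          intro i
          rw [abs_mul, abs_pow, abs_of_pos hs0]
          exact mul_le_mul_of_nonneg_left
            (pow_le_pow_of_le_one hs0.le hs1.le (by omega)) (abs_nonneg _)
        have h8 : ∑' i, |c (i + (k+1))| * s ^ (k+1) = (∑' i, |c (i + (k+1))|) * s ^ (k+1) :=
          tsum_mul_right
        have h9 : (∑' i, |c (i + (k+1))|) * s ^ (k+1) ≤ C * s ^ (k+1) :=
          mul_le_mul_of_nonneg_right htail_le (pow_pos hs0 _).le
        calc |∑' i, c (i + (k+1)) * s ^ (i + (k+1))|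
            ≤ ∑' i, |c (i + (k+1)) * s ^ (i + (k+1))| := h6
          _ ≤ C * s ^ (k+1) := by linarith
          _ = s ^ (k+1) * C := mul_comm _ _
      have hckk : |c k| * s ^ k ≤ s ^ (k+1) * C := by
        have h1 : c k * s ^ k = -(∑' i, c (i + (k+1)) * s ^ (i + (k+1))) := by linarith
        calc |c k| * s ^ k = |c k * s ^ k| := by rw [abs_mul, abs_pow, abs_of_pos hs0]
          _ = |∑' i, c (i + (k+1)) * s ^ (i + (k+1))| := by rw [h1, abs_neg]
          _ ≤ s ^ (k+1) * C := htail
      have hps : s ^ (k+1) * C = (s * C) * s ^ k := by ring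
      rw [hps] at hckk
      have := le_of_mul_le_mul_right hckk hsk
      nlinarith
    set s0 : ℝ := min (1/2) (|c k| / (2 * (C + 1))) with hs0def
    have hCp : (0:ℝ) < C + 1 := by linarith
    have hs0pos : 0 < s0 := lt_min (by norm_num) (div_pos hckpos (by linarith))
    have hs0lt : s0 < 1 := lt_of_le_of_lt (min_le_left _ _) (by norm_num)
    have hk := key s0 ⟨hs0pos, hs0lt⟩
    have hfin2 : s0 * (C + 1) ≤ |c k| / 2 := by
      have h1 : s0 ≤ |c k| / (2 * (C + 1)) := min_le_right _ _
      have h2 : s0 * (C + 1) ≤ (|c k| / (2 * (C + 1))) * (C + 1) :=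
        mul_le_mul_of_nonneg_right h1 hCp.le
      have h3 : (|c k| / (2 * (C + 1))) * (C + 1) = |c k| / 2 := by
        field_simp
      linarith
    linarith

/-- if the generating function `g` of a probability measure `ν` on ℕ₊
satisfies `g(f(s)) - g(f(0)) = m^α g(s)` on `[0,1]` for some `α > 0`, then `ν` is a
quasi-stationary distribution of the subcritical GW-process, i.e.
`P_ν(N_n = j | N_n > 0) = ν(j)` for all `j ≥ 1`, `n ≥ 0`.
Here `law k n j = P_k(N_n = j)` is the law of the GW-process started from `k`
particles, characterized by its generating function `f_n(s)^k`. -/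
theorem stmt0 (p ν : ℕ → ℝ) (m α : ℝ)
    (hp_nonneg : ∀ j, 0 ≤ p j) (hp_sum : ∑' j, p j = 1)
    (hm : m = ∑' j : ℕ, (j : ℝ) * p j) (hm_pos : 0 < m) (hm_lt : m < 1)
    (hν_nonneg : ∀ j, 0 ≤ ν j) (hν_zero : ν 0 = 0) (hν_sum : ∑' j, ν j = 1)
    (law : ℕ → ℕ → ℕ → ℝ)
    (hlaw_nonneg : ∀ k n j, 0 ≤ law k n j)
    (hlaw_sum : ∀ k n, ∑' j, law k n j = 1)
    (hlaw_gf : ∀ k n, ∀ s ∈ Set.Icc (0 : ℝ) 1,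
        ∑' j, law k n j * s ^ j = genFunIter p n s ^ k)
    (hα : 0 < α)
    (heq : ∀ s ∈ Set.Icc (0 : ℝ) 1,
        (∑' j, ν j * genFun p s ^ j) - (∑' j, ν j * genFun p 0 ^ j)
          = m ^ α * ∑' j, ν j * s ^ j) :
    ∀ n : ℕ, ∀ j : ℕ, 1 ≤ j →
      (∑' k, ν k * law k n j) / (1 - ∑' k, ν k * law k n 0) = ν j := by
  have h01 : (0:ℝ) ∈ Set.Icc (0:ℝ) 1 := by norm_num
  have h11 : (1:ℝ) ∈ Set.Icc (0:ℝ) 1 := by norm_num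
  -- summability of the various distributions
  have hpS : Summable p := by
    by_contra hn; rw [tsum_eq_zero_of_not_summable hn] at hp_sum; norm_num at hp_sum
  have hνS : Summable ν := by
    by_contra hn; rw [tsum_eq_zero_of_not_summable hn] at hν_sum; norm_num at hν_sum
  have hlawS : ∀ k n, Summable (law k n) := by
    intro k n
    by_contra hn
    have := hlaw_sum k n
    rw [tsum_eq_zero_of_not_summable hn] at this; norm_num at this
  have hlaw_le_one : ∀ k n j, law k n j ≤ 1 := by
    intro k n j
    have h1 := Summable.le_tsum (hlawS k n) j (fun i _ => hlaw_nonneg k n i)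
    rw [hlaw_sum k n] at h1
    exact h1
  -- generating function basics
  have hgenS : ∀ s : ℝ, s ∈ Set.Icc (0:ℝ) 1 → Summable fun j => p j * s ^ j := by
    intro s hs
    apply hpS.of_nonneg_of_le (fun j => mul_nonneg (hp_nonneg j) (pow_nonneg hs.1 j))
    intro j
    calc p j * s ^ j ≤ p j * 1 :=
          mul_le_mul_of_nonneg_left (pow_le_one₀ hs.1 hs.2) (hp_nonneg j)
      _ = p j := mul_one _
  have hgen_mem : ∀ s ∈ Set.Icc (0:ℝ) 1, genFun p s ∈ Set.Icc (0:ℝ) 1 := by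
    intro s hs
    constructor
    · exact tsum_nonneg fun j => mul_nonneg (hp_nonneg j) (pow_nonneg hs.1 j)
    · calc genFun p s ≤ ∑' j, p j := by
            apply Summable.tsum_le_tsum _ (hgenS s hs) hpS
            intro j
            calc p j * s ^ j ≤ p j * 1 :=
                  mul_le_mul_of_nonneg_left (pow_le_one₀ hs.1 hs.2) (hp_nonneg j)
              _ = p j := mul_one _
        _ = 1 := hp_sum
  have hgen_one : genFun p 1 = 1 := by
    unfold genFun; simp only [one_pow, mul_one]; exact hp_sum
  have hiter_mem : ∀ n, ∀ s ∈ Set.Icc (0:ℝ) 1, genFunIter p n s ∈ Set.Icc (0:ℝ) 1 := by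
    intro n
    induction n with
    | zero => intro s hs; exact hs
    | succ n ihn =>
        intro s hs
        show genFun p (genFunIter p n s) ∈ Set.Icc (0:ℝ) 1
        exact hgen_mem _ (ihn s hs)
  have hiter_one : ∀ n, genFunIter p n 1 = 1 := by
    intro n
    induction n with
    | zero => rfl
    | succ n ihn => show genFun p (genFunIter p n 1) = 1; rw [ihn, hgen_one]
  have hiter_succ : ∀ n (s : ℝ), genFunIter p (n+1) s = genFunIter p n (genFun p s) := by
    intro n
    induction n with
    | zero => intro s; rfl
    | succ n ihn =>
        intro s
        show genFun p (genFunIter p (n+1) s) = genFun p (genFunIter p n (genFun p s))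
        rw [ihn s]
  -- generating function of ν
  have hGS : ∀ s : ℝ, s ∈ Set.Icc (0:ℝ) 1 → Summable fun j => ν j * s ^ j := by
    intro s hs
    apply hνS.of_nonneg_of_le (fun j => mul_nonneg (hν_nonneg j) (pow_nonneg hs.1 j))
    intro j
    calc ν j * s ^ j ≤ ν j * 1 :=
          mul_le_mul_of_nonneg_left (pow_le_one₀ hs.1 hs.2) (hν_nonneg j)
      _ = ν j := mul_one _
  have hG0 : (∑' j, ν j * (0:ℝ) ^ j) = 0 := by
    rw [tsum_eq_single 0 (fun b hb => by simp [zero_pow hb])]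
    simp [hν_zero]
  -- main functional-equation iteration
  have hmain : ∀ n, ∀ s ∈ Set.Icc (0:ℝ) 1,
      (∑' j, ν j * (genFunIter p n s) ^ j) - (∑' j, ν j * (genFunIter p n 0) ^ j)
        = (m ^ α) ^ n * ∑' j, ν j * s ^ j := by
    intro n
    induction n with
    | zero =>
        intro s hs
        show (∑' j, ν j * s ^ j) - (∑' j, ν j * (0:ℝ) ^ j) = _
        rw [hG0, pow_zero, one_mul, sub_zero]
    | succ n ihn =>
        intro s hs
        rw [hiter_succ n s, hiter_succ n 0]
        have e1 := ihn (genFun p s) (hgen_mem s hs)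
        have e2 := ihn (genFun p 0) (hgen_mem 0 h01)
        have e3 := heq s hs
        have hring : (m ^ α) ^ (n+1) * (∑' j, ν j * s ^ j)
            = (m ^ α) ^ n * (m ^ α * ∑' j, ν j * s ^ j) := by ring
        rw [hring, ← e3, mul_sub]
        linarith
  -- Fubini: generating function of the ν-mixture of the laws
  have hFub : ∀ n, ∀ s ∈ Set.Icc (0:ℝ) 1,
      (Summable fun i => (∑' k, ν k * law k n i) * s ^ i) ∧
      (∑' i, (∑' k, ν k * law k n i) * s ^ i) = ∑' k, ν k * (genFunIter p n s) ^ k := by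
    intro n s hs
    have hxm : genFunIter p n s ∈ Set.Icc (0:ℝ) 1 := hiter_mem n s hs
    have hrowS : ∀ k, Summable fun i => ν k * (law k n i * s ^ i) := by
      intro k
      apply Summable.mul_left
      apply (hlawS k n).of_nonneg_of_le
        (fun i => mul_nonneg (hlaw_nonneg _ _ _) (pow_nonneg hs.1 i))
      intro i
      calc law k n i * s ^ i ≤ law k n i * 1 :=
            mul_le_mul_of_nonneg_left (pow_le_one₀ hs.1 hs.2) (hlaw_nonneg _ _ _)
        _ = law k n i := mul_one _
    have hrow : ∀ k, (∑' i, ν k * (law k n i * s ^ i)) = ν k * (genFunIter p n s) ^ k := by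
      intro k
      rw [tsum_mul_left, hlaw_gf k n s hs]
    have hcolS2 : Summable fun k => ν k * (genFunIter p n s) ^ k := by
      apply hνS.of_nonneg_of_le (fun k => mul_nonneg (hν_nonneg k) (pow_nonneg hxm.1 k))
      intro k
      calc ν k * (genFunIter p n s) ^ k ≤ ν k * 1 :=
            mul_le_mul_of_nonneg_left (pow_le_one₀ hxm.1 hxm.2) (hν_nonneg k)
        _ = ν k := mul_one _
    have hFnn : (0 : ℕ × ℕ → ℝ) ≤ fun q => ν q.1 * (law q.1 n q.2 * s ^ q.2) := by
      intro q
      exact mul_nonneg (hν_nonneg _) (mul_nonneg (hlaw_nonneg _ _ _) (pow_nonneg hs.1 _))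
    have hFS : Summable (fun q : ℕ × ℕ => ν q.1 * (law q.1 n q.2 * s ^ q.2)) := by
      apply (summable_prod_of_nonneg hFnn).mpr
      refine ⟨hrowS, ?_⟩
      have hfe : (fun k => ∑' i, ν k * (law k n i * s ^ i))
          = fun k => ν k * (genFunIter p n s) ^ k := funext hrow
      rw [hfe]
      exact hcolS2
    have hcol : ∀ i, Summable fun k => ν k * (law k n i * s ^ i) := by
      intro i
      apply hνS.of_nonneg_of_le
        (fun k => mul_nonneg (hν_nonneg k) (mul_nonneg (hlaw_nonneg _ _ _) (pow_nonneg hs.1 i)))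
      intro k
      have h1 : law k n i * s ^ i ≤ 1 := by
        calc law k n i * s ^ i ≤ 1 * 1 := by
              apply mul_le_mul (hlaw_le_one k n i) (pow_le_one₀ hs.1 hs.2)
                (pow_nonneg hs.1 i) zero_le_one
          _ = 1 := mul_one _
      calc ν k * (law k n i * s ^ i) ≤ ν k * 1 :=
            mul_le_mul_of_nonneg_left h1 (hν_nonneg k)
        _ = ν k := mul_one _
    have hterm : ∀ i, (∑' k, ν k * law k n i) * s ^ i = ∑' k, ν k * (law k n i * s ^ i) := by
      intro i
      rw [← tsum_mul_right]
      exact tsum_congr fun k => by ring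
    have hswapS : Summable fun i => ∑' k, ν k * (law k n i * s ^ i) := by
      have hFS' : Summable (fun q : ℕ × ℕ => ν q.2 * (law q.2 n q.1 * s ^ q.1)) :=
        hFS.prod_symm
      have hFnn' : (0 : ℕ × ℕ → ℝ) ≤ fun q => ν q.2 * (law q.2 n q.1 * s ^ q.1) := by
        intro q
        exact mul_nonneg (hν_nonneg _) (mul_nonneg (hlaw_nonneg _ _ _) (pow_nonneg hs.1 _))
      exact ((summable_prod_of_nonneg hFnn').mp hFS').2
    constructor
    · have hfe2 : (fun i => (∑' k, ν k * law k n i) * s ^ i)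
          = fun i => ∑' k, ν k * (law k n i * s ^ i) := funext hterm
      rw [hfe2]
      exact hswapS
    · calc (∑' i, (∑' k, ν k * law k n i) * s ^ i)
          = ∑' i, ∑' k, ν k * (law k n i * s ^ i) := tsum_congr hterm
        _ = ∑' k, ∑' i, ν k * (law k n i * s ^ i) := Summable.tsum_comm' hFS hrowS hcol
        _ = ∑' k, ν k * (genFunIter p n s) ^ k := tsum_congr hrow
  -- the conclusion
  intro n j hj
  set M := (m ^ α) ^ n with hM
  have hMpos : 0 < M := pow_pos (Real.rpow_pos_of_pos hm_pos α) n
  have hμS : Summable fun i => ∑' k, ν k * law k n i := by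
    have h2 := (hFub n 1 h11).1
    simpa using h2
  have hμ1 : (∑' i, ∑' k, ν k * law k n i) = 1 := by
    have h2 := (hFub n 1 h11).2
    rw [hiter_one n] at h2
    simp only [one_pow, mul_one] at h2
    rw [h2, hν_sum]
  have hμ0 : (∑' k, ν k * law k n 0) = ∑' k, ν k * (genFunIter p n 0) ^ k := by
    have h2 := (hFub n 0 h01).2
    have e : (∑' i, (∑' k, ν k * law k n i) * (0:ℝ) ^ i) = ∑' k, ν k * law k n 0 := by
      rw [tsum_eq_single 0 (fun b hb => by simp [zero_pow hb])]
      simp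
    rw [← h2, e]
  set c : ℕ → ℝ := fun i => if i = 0 then 0 else (∑' k, ν k * law k n i) - M * ν i with hcdef
  have hμnn : ∀ i, 0 ≤ ∑' k, ν k * law k n i := fun i =>
    tsum_nonneg fun k => mul_nonneg (hν_nonneg k) (hlaw_nonneg k n i)
  have hcabs : Summable fun i => |c i| := by
    apply Summable.of_nonneg_of_le (fun i => abs_nonneg _) _ (hμS.add (hνS.mul_left M))
    intro i
    have h1 : 0 ≤ ∑' k, ν k * law k n i := hμnn i
    have h2 : 0 ≤ M * ν i := mul_nonneg hMpos.le (hν_nonneg i)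
    by_cases hi : i = 0
    · subst hi
      simp only [hcdef, if_pos rfl, abs_zero]
      exact add_nonneg h1 h2
    · simp only [hcdef, if_neg hi]
      exact abs_le.mpr ⟨by linarith, by linarith⟩
  have hczero : ∀ s ∈ Set.Ioo (0:ℝ) 1, (∑' i, c i * s ^ i) = 0 := by
    intro s hs
    have hsI : s ∈ Set.Icc (0:ℝ) 1 := ⟨hs.1.le, hs.2.le⟩
    have h1 : Summable fun i => (∑' k, ν k * law k n i) * s ^ i := (hFub n s hsI).1
    have h2 : Summable fun i => M * (ν i * s ^ i) := (hGS s hsI).mul_left M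
    have h3 : Summable fun i => (if i = 0 then (∑' k, ν k * law k n 0) else 0 : ℝ) := by
      apply summable_of_ne_finset_zero (s := {0})
      intro b hb
      simp only [Finset.mem_singleton] at hb
      simp [hb]
    have hfe : (fun i => c i * s ^ i)
        = fun i => ((∑' k, ν k * law k n i) * s ^ i - M * (ν i * s ^ i))
            - (if i = 0 then (∑' k, ν k * law k n 0) else 0) := by
      funext i
      by_cases hi : i = 0
      · subst hi; simp [hcdef, hν_zero]
      · simp only [hcdef, if_neg hi]
        ring
    rw [hfe, Summable.tsum_sub (h1.sub h2) h3, Summable.tsum_sub h1 h2]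
    have e1 : (∑' i, (∑' k, ν k * law k n i) * s ^ i)
        = ∑' k, ν k * (genFunIter p n s) ^ k := (hFub n s hsI).2
    have e2 : (∑' i, M * (ν i * s ^ i)) = M * ∑' i, ν i * s ^ i := tsum_mul_left
    have e3 : (∑' i, (if i = 0 then (∑' k, ν k * law k n 0) else 0 : ℝ))
        = ∑' k, ν k * law k n 0 := by
      rw [tsum_eq_single 0 (fun b hb => by simp [hb])]
      simp
    rw [e1, e2, e3, hμ0]
    have e4 := hmain n s hsI
    rw [← hM] at e4
    linarith
  have hc := coeffs_zero c hcabs hczero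
  have hnum : (∑' k, ν k * law k n j) = M * ν j := by
    have h1 := hc j
    have hj0 : j ≠ 0 := by omega
    simp only [hcdef, if_neg hj0] at h1
    linarith
  have hden : 1 - (∑' k, ν k * law k n 0) = M := by
    have hterm2 : ∀ i : ℕ, (∑' k, ν k * law k n (i+1)) = M * ν (i+1) := by
      intro i
      have h1 := hc (i+1)
      simp only [hcdef, if_neg (Nat.succ_ne_zero i)] at h1
      linarith
    have hν1 : (∑' i, ν (i+1)) = 1 := by
      have h1 := Summable.tsum_eq_zero_add hνS
      rw [hν_sum, hν_zero] at h1
      linarith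
    have htail : (∑' i, ∑' k, ν k * law k n (i+1)) = M := by
      calc (∑' i, ∑' k, ν k * law k n (i+1)) = ∑' i, M * ν (i+1) := tsum_congr hterm2
        _ = M * ∑' i, ν (i+1) := tsum_mul_left
        _ = M := by rw [hν1, mul_one]
    have h0 := Summable.tsum_eq_zero_add hμS
    simp only [hμ1] at h0
    rw [htail] at h0
    linarith
  rw [hnum, hden]
  exact mul_div_cancel_left₀ _ hMpos.ne'
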